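/- Let X and Y be Banach spaces, A ⊆ X an open subset, W ⊆ X a finite-dimensional subspace, and K ⊆ W ∩ A a compact and convex subset. Let F ∈ C¹(A,Y) be such that F|_{W∩A} is injective and F'(x)|_W is injective for every x ∈ W ∩ A. Let Q_N : Y → Y (N ∈ ℕ) be bounded linear maps such that Q_N y → y in Y as N → ∞ for every y ∈ Y. Then there exist N ∈ ℕ and C > 0 such that ‖x₁ − x₂‖_X ≤ C ‖Q_N(F(x₁)) − Q_N(F(x₂))‖_Y for all x₁, x₂ ∈ K. -/

import Mathlib

open Filter Topology

/-- Key subsequence lemma: from any pair of sequences in `K` with distinct terms, one can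
extract a subsequence along which the normalized difference quotients of `F` converge to a
nonzero limit. -/
private lemma seq_lemma
    {X Y : Type*} [NormedAddCommGroup X] [NormedSpace ℝ X]
    [NormedAddCommGroup Y] [NormedSpace ℝ Y]
    (A : Set X) (hA : IsOpen A)
    (W : Submodule ℝ X) [FiniteDimensional ℝ W]
    (K : Set X) (hKWA : K ⊆ (W : Set X) ∩ A)
    (hKcomp : IsCompact K) (hKconv : Convex ℝ K)
    (F : X → Y) (F' : X → X →L[ℝ] Y)
    (hF : ∀ x ∈ A, HasFDerivAt F (F' x) x)
    (hF'cont : ContinuousOn F' A)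
    (hFinj : Set.InjOn F ((W : Set X) ∩ A))
    (hF'inj : ∀ x ∈ (W : Set X) ∩ A, Set.InjOn (F' x) (W : Set X))
    (p q : ℕ → X) (hp : ∀ n, p n ∈ K) (hq : ∀ n, q n ∈ K) (hpq : ∀ n, p n ≠ q n) :
    ∃ (φ : ℕ → ℕ) (z : Y), StrictMono φ ∧ z ≠ 0 ∧
      Tendsto (fun n => ‖p (φ n) - q (φ n)‖⁻¹ • (F (p (φ n)) - F (q (φ n)))) atTop (𝓝 z) := by
  -- extract convergent subsequence of p
  obtain ⟨x, hxK, φ₁, hφ₁, hxlim⟩ := hKcomp.tendsto_subseq hp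
  -- extract convergent subsequence of q ∘ φ₁
  obtain ⟨y, hyK, φ₂, hφ₂, hylim⟩ := hKcomp.tendsto_subseq (fun n => hq (φ₁ n))
  -- the normalized direction vectors live in the (compact) unit sphere of W
  set u : ℕ → X := fun n => ‖p n - q n‖⁻¹ • (p n - q n) with hu_def
  have hnorm_ne : ∀ n, ‖p n - q n‖ ≠ 0 := fun n =>
    norm_ne_zero_iff.mpr (sub_ne_zero.mpr (hpq n))
  have hWmem : ∀ n, p n - q n ∈ W := fun n =>
    W.sub_mem ((hKWA (hp n)).1) ((hKWA (hq n)).1)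
  set S : Set X := Subtype.val '' (Metric.sphere (0 : W) 1) with hS_def
  have hScomp : IsCompact S := (isCompact_sphere (0 : W) 1).image continuous_subtype_val
  have huS : ∀ n, u n ∈ S := by
    intro n
    refine ⟨⟨u n, W.smul_mem _ (hWmem n)⟩, ?_, rfl⟩
    rw [Metric.mem_sphere, dist_zero_right]
    show ‖u n‖ = 1
    rw [hu_def]
    simp only [norm_smul, norm_inv, norm_norm]
    exact inv_mul_cancel₀ (hnorm_ne n)
  obtain ⟨u₀, hu₀S, φ₃, hφ₃, hulim⟩ := hScomp.tendsto_subseq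
    (fun n => huS (φ₁ (φ₂ n)))
  obtain ⟨u₀', hu₀'sph, hu₀'eq⟩ := hu₀S
  have hu₀W : u₀ ∈ W := hu₀'eq ▸ u₀'.2
  have hu₀norm : ‖u₀‖ = 1 := by
    have := hu₀'sph
    rw [Metric.mem_sphere, dist_zero_right] at this
    rw [← hu₀'eq]
    exact this
  set φ : ℕ → ℕ := fun n => φ₁ (φ₂ (φ₃ n)) with hφ_def
  have hφmono : StrictMono φ := hφ₁.comp (hφ₂.comp hφ₃)
  have hplim : Tendsto (fun n => p (φ n)) atTop (𝓝 x) :=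
    hxlim.comp ((hφ₂.comp hφ₃).tendsto_atTop)
  have hqlim : Tendsto (fun n => q (φ n)) atTop (𝓝 y) :=
    hylim.comp hφ₃.tendsto_atTop
  have hu'lim : Tendsto (fun n => u (φ n)) atTop (𝓝 u₀) := hulim
  have hxA : x ∈ A := (hKWA hxK).2
  have hyA : y ∈ A := (hKWA hyK).2
  by_cases hxy : x = y
  · -- near-diagonal case: the limit is `F' x u₀`
    subst hxy
    refine ⟨φ, F' x u₀, hφmono, ?_, ?_⟩
    · intro h0
      have : u₀ = 0 := (hF'inj x (hKWA hxK)) hu₀W W.zero_mem (by simpa using h0)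
      rw [this, norm_zero] at hu₀norm
      exact one_ne_zero hu₀norm.symm
    · -- decompose the quotient as F' x (u (φ n)) + remainder
      have key : ∀ n, ‖p (φ n) - q (φ n)‖⁻¹ • (F (p (φ n)) - F (q (φ n)))
          = F' x (u (φ n)) +
            ‖p (φ n) - q (φ n)‖⁻¹ •
              (F (p (φ n)) - F (q (φ n)) - F' x (p (φ n) - q (φ n))) := by
        intro n
        simp only [hu_def, map_smul]
        module
      have h1 : Tendsto (fun n => F' x (u (φ n))) atTop (𝓝 (F' x u₀)) :=
        ((F' x).continuous.tendsto u₀).comp hu'lim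
      have h2 : Tendsto (fun n => ‖p (φ n) - q (φ n)‖⁻¹ •
          (F (p (φ n)) - F (q (φ n)) - F' x (p (φ n) - q (φ n)))) atTop (𝓝 0) := by
        rw [NormedAddCommGroup.tendsto_nhds_zero]
        intro ε hε
        have hcontx : ContinuousAt F' x := hF'cont.continuousAt (hA.mem_nhds hxA)
        obtain ⟨δ, hδpos, hδ⟩ := Metric.continuousAt_iff.mp hcontx (ε / 2) (half_pos hε)
        have hpball : ∀ᶠ n in atTop, p (φ n) ∈ Metric.ball x δ :=
          hplim (Metric.ball_mem_nhds x hδpos)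
        have hqball : ∀ᶠ n in atTop, q (φ n) ∈ Metric.ball x δ :=
          hqlim (Metric.ball_mem_nhds x hδpos)
        filter_upwards [hpball, hqball] with n hpn hqn
        set s : Set X := K ∩ Metric.ball x δ with hs_def
        have hsconv : Convex ℝ s := hKconv.inter (convex_ball x δ)
        have hsd : ∀ t ∈ s, HasFDerivWithinAt F (F' t) s t := fun t ht =>
          (hF t (hKWA ht.1).2).hasFDerivWithinAt
        have hsb : ∀ t ∈ s, ‖F' t - F' x‖ ≤ ε / 2 := by
          intro t ht
          have := hδ (Metric.mem_ball.mp ht.2)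
          rw [dist_eq_norm] at this
          exact this.le
        have hmv := hsconv.norm_image_sub_le_of_norm_hasFDerivWithin_le' hsd hsb
          (x := q (φ n)) (y := p (φ n)) ⟨hq (φ n), hqn⟩ ⟨hp (φ n), hpn⟩
        have hbound : ‖‖p (φ n) - q (φ n)‖⁻¹ •
            (F (p (φ n)) - F (q (φ n)) - F' x (p (φ n) - q (φ n)))‖ ≤ ε / 2 := by
          rw [norm_smul, norm_inv, norm_norm]
          calc ‖p (φ n) - q (φ n)‖⁻¹ *
              ‖F (p (φ n)) - F (q (φ n)) - F' x (p (φ n) - q (φ n))‖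
              ≤ ‖p (φ n) - q (φ n)‖⁻¹ * (ε / 2 * ‖p (φ n) - q (φ n)‖) := by
                apply mul_le_mul_of_nonneg_left hmv
                positivity
            _ = ε / 2 := by
                rw [mul_comm (ε / 2), ← mul_assoc,
                  inv_mul_cancel₀ (hnorm_ne (φ n)), one_mul]
        calc ‖‖p (φ n) - q (φ n)‖⁻¹ •
            (F (p (φ n)) - F (q (φ n)) - F' x (p (φ n) - q (φ n)))‖
            ≤ ε / 2 := hbound
          _ < ε := half_lt_self hε
      have := h1.add h2
      rw [add_zero] at this
      exact this.congr (fun n => (key n).symm)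
  · -- off-diagonal case: the limit is the normalized difference of values
    have hFxy : F x ≠ F y := fun h => hxy (hFinj (hKWA hxK) (hKWA hyK) h)
    have hxyne : ‖x - y‖ ≠ 0 := norm_ne_zero_iff.mpr (sub_ne_zero.mpr hxy)
    refine ⟨φ, ‖x - y‖⁻¹ • (F x - F y), hφmono, ?_, ?_⟩
    · exact smul_ne_zero (inv_ne_zero hxyne) (sub_ne_zero.mpr hFxy)
    · have hFp : Tendsto (fun n => F (p (φ n))) atTop (𝓝 (F x)) :=
        ((hF x hxA).continuousAt.tendsto).comp hplim
      have hFq : Tendsto (fun n => F (q (φ n))) atTop (𝓝 (F y)) :=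
        ((hF y hyA).continuousAt.tendsto).comp hqlim
      have hn : Tendsto (fun n => ‖p (φ n) - q (φ n)‖) atTop (𝓝 ‖x - y‖) :=
        (hplim.sub hqlim).norm
      exact (hn.inv₀ hxyne).smul (hFp.sub hFq)

set_option maxHeartbeats 1000000 in
/-- Corollary `cor:main`, case (a): if `Q_N → I_Y` strongly, then there
exist `N` and `C > 0` giving Lipschitz stability with finitely many measurements. -/
theorem corollary_strong_convergence
    {X Y : Type*} [NormedAddCommGroup X] [NormedSpace ℝ X] [CompleteSpace X]
    [NormedAddCommGroup Y] [NormedSpace ℝ Y] [CompleteSpace Y]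
    (A : Set X) (hA : IsOpen A)
    (W : Submodule ℝ X) [FiniteDimensional ℝ W]
    (K : Set X) (hKWA : K ⊆ (W : Set X) ∩ A)
    (hKcomp : IsCompact K) (hKconv : Convex ℝ K)
    (F : X → Y) (F' : X → X →L[ℝ] Y)
    (hF : ∀ x ∈ A, HasFDerivAt F (F' x) x)
    (hF'cont : ContinuousOn F' A)
    (hFinj : Set.InjOn F ((W : Set X) ∩ A))
    (hF'inj : ∀ x ∈ (W : Set X) ∩ A, Set.InjOn (F' x) (W : Set X))
    (Q : ℕ → Y →L[ℝ] Y)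
    (hQ : ∀ y : Y, Tendsto (fun N => Q N y) atTop (𝓝 y)) :
    ∃ (N : ℕ) (C : ℝ), 0 < C ∧
      ∀ x₁ ∈ K, ∀ x₂ ∈ K, ‖x₁ - x₂‖ ≤ C * ‖Q N (F x₁) - Q N (F x₂)‖ := by
  -- Step 1: Lipschitz stability for F itself.
  have step1 : ∃ c : ℝ, 0 < c ∧ ∀ x₁ ∈ K, ∀ x₂ ∈ K, c * ‖x₁ - x₂‖ ≤ ‖F x₁ - F x₂‖ := by
    by_contra h
    push_neg at h
    have hch : ∀ n : ℕ, ∃ x₁ ∈ K, ∃ x₂ ∈ K,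
        ‖F x₁ - F x₂‖ < ((n : ℝ) + 1)⁻¹ * ‖x₁ - x₂‖ := by
      intro n
      obtain ⟨x₁, h₁, x₂, h₂, hlt⟩ := h (((n : ℝ) + 1)⁻¹) (by positivity)
      exact ⟨x₁, h₁, x₂, h₂, hlt⟩
    choose p hp q hq hlt using hch
    have hpq : ∀ n, p n ≠ q n := by
      intro n h
      have := hlt n
      rw [h] at this
      simp at this
    obtain ⟨φ, z, hφ, hz, hlim⟩ := seq_lemma A hA W K hKWA hKcomp hKconv F F'
      hF hF'cont hFinj hF'inj p q hp hq hpq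
    have hzn : Tendsto (fun n => ‖‖p (φ n) - q (φ n)‖⁻¹ • (F (p (φ n)) - F (q (φ n)))‖)
        atTop (𝓝 ‖z‖) := hlim.norm
    have hbound : ∀ n, ‖‖p (φ n) - q (φ n)‖⁻¹ • (F (p (φ n)) - F (q (φ n)))‖
        ≤ ((φ n : ℝ) + 1)⁻¹ := by
      intro n
      have hne : ‖p (φ n) - q (φ n)‖ ≠ 0 :=
        norm_ne_zero_iff.mpr (sub_ne_zero.mpr (hpq (φ n)))
      rw [norm_smul, norm_inv, norm_norm]
      rw [inv_mul_le_iff₀ (lt_of_le_of_ne (norm_nonneg _) (Ne.symm hne))]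
      calc ‖F (p (φ n)) - F (q (φ n))‖
          ≤ ((φ n : ℝ) + 1)⁻¹ * ‖p (φ n) - q (φ n)‖ := (hlt (φ n)).le
        _ = ‖p (φ n) - q (φ n)‖ * ((φ n : ℝ) + 1)⁻¹ := mul_comm _ _
    have hto0 : Tendsto (fun n => ((φ n : ℝ) + 1)⁻¹) atTop (𝓝 0) := by
      have h1 : Tendsto (fun n => ((φ n : ℝ) + 1)) atTop atTop :=
        (tendsto_natCast_atTop_atTop.comp hφ.tendsto_atTop).atTop_add tendsto_const_nhds
      exact h1.inv_tendsto_atTop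
    have hznle : ‖z‖ ≤ 0 :=
      le_of_tendsto_of_tendsto hzn hto0 (Eventually.of_forall hbound)
    exact hz (norm_le_zero_iff.mp hznle)
  obtain ⟨c, hc, hcK⟩ := step1
  -- Step 2: uniform bound on the operators Q N via Banach–Steinhaus.
  obtain ⟨M, hM⟩ : ∃ M : ℝ, ∀ N, ‖Q N‖ ≤ M := by
    apply banach_steinhaus
    intro y
    have hb : BddAbove (Set.range fun N => ‖Q N y‖) := (hQ y).norm.bddAbove_range
    obtain ⟨C, hC⟩ := hb
    exact ⟨C, fun i => hC ⟨i, rfl⟩⟩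
  -- Step 3: there is N so that (Q N - I) is small on the normalized differences.
  have step3 : ∃ N : ℕ, ∀ x₁ ∈ K, ∀ x₂ ∈ K,
      ‖Q N (F x₁ - F x₂) - (F x₁ - F x₂)‖ ≤ c / 2 * ‖x₁ - x₂‖ := by
    by_contra h
    push_neg at h
    choose p hp q hq hgt using h
    have hpq : ∀ n, p n ≠ q n := by
      intro n hn
      have := hgt n
      rw [hn] at this
      simp at this
    obtain ⟨φ, z, hφ, hz, hlim⟩ := seq_lemma A hA W K hKWA hKcomp hKconv F F'
      hF hF'cont hFinj hF'inj p q hp hq hpq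
    set w : ℕ → Y := fun n => ‖p (φ n) - q (φ n)‖⁻¹ • (F (p (φ n)) - F (q (φ n))) with hw
    -- from the negation: ‖Q (φ n) (w n) - w n‖ > c / 2
    have hgt' : ∀ n, c / 2 < ‖Q (φ n) (w n) - w n‖ := by
      intro n
      have hne : (0:ℝ) < ‖p (φ n) - q (φ n)‖ :=
        norm_pos_iff.mpr (sub_ne_zero.mpr (hpq (φ n)))
      have := hgt (φ n)
      have heq : Q (φ n) (w n) - w n
          = ‖p (φ n) - q (φ n)‖⁻¹ •
            (Q (φ n) (F (p (φ n)) - F (q (φ n))) - (F (p (φ n)) - F (q (φ n)))) := by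
        simp only [hw, map_sub, map_smul, smul_sub]
      rw [heq, norm_smul, norm_inv, norm_norm]
      rw [lt_inv_mul_iff₀ hne]
      calc ‖p (φ n) - q (φ n)‖ * (c / 2) = c / 2 * ‖p (φ n) - q (φ n)‖ := mul_comm _ _
        _ < ‖Q (φ n) (F (p (φ n)) - F (q (φ n))) - (F (p (φ n)) - F (q (φ n)))‖ := this
    -- but Q (φ n) (w n) - w n → 0
    have hto0 : Tendsto (fun n => Q (φ n) (w n) - w n) atTop (𝓝 0) := by
      have hdecomp : ∀ n, Q (φ n) (w n) - w n
          = (Q (φ n) (w n - z) - (w n - z)) + (Q (φ n) z - z) := by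
        intro n
        simp only [map_sub]
        abel
      have h1 : Tendsto (fun n => Q (φ n) (w n - z) - (w n - z)) atTop (𝓝 0) := by
        have hwz : Tendsto (fun n => ‖w n - z‖) atTop (𝓝 0) :=
          tendsto_iff_norm_sub_tendsto_zero.mp hlim
        have hb : ∀ n, ‖Q (φ n) (w n - z) - (w n - z)‖ ≤ (M + 1) * ‖w n - z‖ := by
          intro n
          calc ‖Q (φ n) (w n - z) - (w n - z)‖
              ≤ ‖Q (φ n) (w n - z)‖ + ‖w n - z‖ := norm_sub_le _ _
            _ ≤ ‖Q (φ n)‖ * ‖w n - z‖ + ‖w n - z‖ :=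
                add_le_add_left ((Q (φ n)).le_opNorm _) _
            _ ≤ M * ‖w n - z‖ + 1 * ‖w n - z‖ := by
                rw [one_mul]
                exact add_le_add_left
                  (mul_le_mul_of_nonneg_right (hM (φ n)) (norm_nonneg _)) _
            _ = (M + 1) * ‖w n - z‖ := by ring
        have : Tendsto (fun n => (M + 1) * ‖w n - z‖) atTop (𝓝 0) := by
          simpa using hwz.const_mul (M + 1)
        exact squeeze_zero_norm hb this
      have h2 : Tendsto (fun n => Q (φ n) z - z) atTop (𝓝 0) := by
        have := (hQ z).comp hφ.tendsto_atTop
        have := this.sub (tendsto_const_nhds (x := z))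
        simpa using this
      have := h1.add h2
      rw [add_zero] at this
      exact this.congr (fun n => (hdecomp n).symm)
    have : ∀ᶠ n in atTop, ‖Q (φ n) (w n) - w n‖ < c / 2 := by
      have := (NormedAddCommGroup.tendsto_nhds_zero.mp hto0) (c / 2) (half_pos hc)
      exact this
    obtain ⟨n, hn⟩ := this.exists
    exact absurd (hgt' n) (not_lt.mpr hn.le)
  obtain ⟨N, hN⟩ := step3
  refine ⟨N, 2 / c, by positivity, ?_⟩
  intro x₁ h₁ x₂ h₂
  have key : c / 2 * ‖x₁ - x₂‖ ≤ ‖Q N (F x₁) - Q N (F x₂)‖ := by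
    have h1 : ‖Q N (F x₁) - Q N (F x₂)‖
        = ‖(F x₁ - F x₂) + (Q N (F x₁ - F x₂) - (F x₁ - F x₂))‖ := by
      rw [map_sub]
      congr 1
      abel
    calc c / 2 * ‖x₁ - x₂‖ = c * ‖x₁ - x₂‖ - c / 2 * ‖x₁ - x₂‖ := by ring
      _ ≤ ‖F x₁ - F x₂‖ - ‖Q N (F x₁ - F x₂) - (F x₁ - F x₂)‖ :=
          sub_le_sub (hcK x₁ h₁ x₂ h₂) (hN x₁ h₁ x₂ h₂)
      _ ≤ ‖(F x₁ - F x₂) + (Q N (F x₁ - F x₂) - (F x₁ - F x₂))‖ := by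
          have := norm_add_le_of_le (le_refl ‖(F x₁ - F x₂) + (Q N (F x₁ - F x₂) - (F x₁ - F x₂))‖) (le_refl ‖Q N (F x₁ - F x₂) - (F x₁ - F x₂)‖)
          have h2 : ‖F x₁ - F x₂‖ ≤ ‖(F x₁ - F x₂) + (Q N (F x₁ - F x₂) - (F x₁ - F x₂))‖ + ‖Q N (F x₁ - F x₂) - (F x₁ - F x₂)‖ := by
            calc ‖F x₁ - F x₂‖
                = ‖((F x₁ - F x₂) + (Q N (F x₁ - F x₂) - (F x₁ - F x₂))) - (Q N (F x₁ - F x₂) - (F x₁ - F x₂))‖ := by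
                  congr 1; abel
              _ ≤ _ := norm_sub_le _ _
          linarith
      _ = ‖Q N (F x₁) - Q N (F x₂)‖ := h1.symm
  calc ‖x₁ - x₂‖ = 2 / c * (c / 2 * ‖x₁ - x₂‖) := by field_simp
    _ ≤ 2 / c * ‖Q N (F x₁) - Q N (F x₂)‖ := by
        apply mul_le_mul_of_nonneg_left key
        positivity
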